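/- Let j ≥ 0 be a half-integer and m₁, m₂ half-integers with j+m₁, j+m₂ ∈ ℤ, −j ≤ m₁, m₂ ≤ j and m₁ ≥ m₂. Then for every θ ∈ (0, π): d^j_{m₁,m₂}(θ) = ( sin(θ/2)^{m₁−m₂} · cos(θ/2)^{m₁+m₂} / ((j+m₂)! · (j−m₂)!) ) · P^{(m₁−m₂, m₁+m₂)}_{j−m₁}(cos θ), where for integers α ≥ 0, β, and N ≥ 0 with α+β+N ≥ 0 the Jacobi polynomial is P^{(α,β)}_N(x) = ( (α+N)! / (N! · (α+β+N)! ) ) · Σ_{s=0}^{N} binom(N, s) · ( (α+β+N+s)! / (α+s)! ) · ((x−1)/2)^s. -/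

import Mathlib

/-- A half-integer is an element of `(1/2)ℤ`. -/
def HalfInt (x : ℝ) : Prop := ∃ k : ℤ, x = k / 2

/-- The little Wigner d-function `d^j_{m₁,m₂}(θ)`, defined as the finite sum
`Σ_p (−1)^{m₂−m₁+p} / ((j+m₁−p)!·p!·(m₂−m₁+p)!·(j−m₂−p)!) · sin(θ/2)^{m₂−m₁+2p} ·
cos(θ/2)^{2j+m₁−m₂−2p}` over integers `p` with `max(0, m₁−m₂) ≤ p ≤ min(j−m₂, j+m₁)`
(the factorials of the nonnegative integers appearing are expressed via the Gamma
function, `x! = Γ(x+1)`). -/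
noncomputable def wignerd (j m₁ m₂ θ : ℝ) : ℝ :=
  ∑ p ∈ Finset.Icc (max 0 ⌈m₁ - m₂⌉) ⌊min (j - m₂) (j + m₁)⌋,
    (-1 : ℝ) ^ (⌈m₂ - m₁⌉ + p) /
      (Real.Gamma (j + m₁ - (p : ℝ) + 1) * Real.Gamma ((p : ℝ) + 1) *
        Real.Gamma (m₂ - m₁ + (p : ℝ) + 1) * Real.Gamma (j - m₂ - (p : ℝ) + 1)) *
      Real.sin (θ / 2) ^ (⌈m₂ - m₁⌉ + 2 * p) *
      Real.cos (θ / 2) ^ (⌊2 * j + m₁ - m₂⌋ - 2 * p)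

open Classical in
/-- The Wigner D-function `W^{(j,n)}_{m₁,m₂}(ζ,ψ,θ,φ)`, with the convention that it is `0`
if `m₁` or `m₂` lies outside `[−j, j]` or `j ± m₁ ∉ ℤ` or `j ± m₂ ∉ ℤ`. -/
noncomputable def WignerD (j n m₁ m₂ : ℝ) (ζ ψ θ φ : ℝ) : ℂ :=
  if (-j ≤ m₁ ∧ m₁ ≤ j) ∧ (-j ≤ m₂ ∧ m₂ ≤ j) ∧
      (∃ a : ℤ, j + m₁ = a) ∧ (∃ a : ℤ, j - m₁ = a) ∧
      (∃ a : ℤ, j + m₂ = a) ∧ (∃ a : ℤ, j - m₂ = a) then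
    ((Real.sqrt (Real.Gamma (j + m₁ + 1) * Real.Gamma (j - m₁ + 1)) *
        Real.sqrt (Real.Gamma (j + m₂ + 1) * Real.Gamma (j - m₂ + 1)) : ℝ) : ℂ) *
      Complex.exp (Complex.I * n * ζ) *
      Complex.exp (Complex.I * (m₁ * ψ + m₂ * φ)) * ((wignerd j m₁ m₂ θ : ℝ) : ℂ)
  else 0

/-- The Jacobi polynomial `P^{(α,β)}_N(x)` for integer parameters, defined by
`P^{(α,β)}_N(x) = ((α+N)!/(N!·(α+β+N)!)) · Σ_{s=0}^{N} binom(N,s) ((α+β+N+s)!/(α+s)!)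
((x−1)/2)^s`, the factorials of the nonnegative integers appearing being expressed via the
Gamma function. -/
noncomputable def jacobiP (α β : ℝ) (N : ℕ) (x : ℝ) : ℝ :=
  Real.Gamma (α + N + 1) / ((N.factorial : ℝ) * Real.Gamma (α + β + N + 1)) *
    ∑ s ∈ Finset.range (N + 1),
      (N.choose s : ℝ) * (Real.Gamma (α + β + N + s + 1) / Real.Gamma (α + s + 1)) *
        ((x - 1) / 2) ^ s

namespace WignerAux
open Finset Nat


lemma sum_triangle (n : ℕ) (f : ℕ → ℕ → ℝ) :
    ∑ s ∈ range (n+1), ∑ k ∈ range (n+1-s), f s k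
      = ∑ t ∈ range (n+1), ∑ s ∈ range (t+1), f s (t-s) := by
  induction n with
  | zero => simp
  | succ n ih =>
    have h2 : ∀ s ∈ range (n+1), ∑ k ∈ range (n+1+1-s), f s k
        = (∑ k ∈ range (n+1-s), f s k) + f s (n+1-s) := by
      intro s hs
      have h3 : n+1+1-s = (n+1-s)+1 := by
        have := mem_range.mp hs; omega
      rw [h3, sum_range_succ]
    calc ∑ s ∈ range (n+1+1), ∑ k ∈ range (n+1+1-s), f s k
        = (∑ s ∈ range (n+1), ∑ k ∈ range (n+1+1-s), f s k) + f (n+1) 0 := by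
          rw [sum_range_succ]; simp
      _ = (∑ s ∈ range (n+1), ((∑ k ∈ range (n+1-s), f s k) + f s (n+1-s))) + f (n+1) 0 := by
          rw [sum_congr rfl h2]
      _ = (∑ s ∈ range (n+1), ∑ k ∈ range (n+1-s), f s k)
            + ((∑ s ∈ range (n+1), f s (n+1-s)) + f (n+1) (n+1-(n+1))) := by
          rw [sum_add_distrib]; simp; ring
      _ = (∑ t ∈ range (n+1), ∑ s ∈ range (t+1), f s (t-s))
            + ∑ s ∈ range (n+1+1), f s (n+1-s) := by
          rw [ih, sum_range_succ (fun s => f s (n+1-s)) (n+1)]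
      _ = ∑ t ∈ range (n+1+1), ∑ s ∈ range (t+1), f s (t-s) := by
          rw [sum_range_succ (fun t => ∑ s ∈ range (t+1), f s (t-s)) (n+1)]


lemma coeff_term (N α B t s : ℕ) (ht : t ≤ N) (hs : s ≤ t) :
    (if s ≤ B then ((N-s).choose (t-s) : ℝ) /
        ((B-s).factorial * (α+s).factorial * s.factorial * (N-s).factorial) else 0)
    = (B.choose s * (α+t).choose (t-s) : ℝ) / (B.factorial * (α+t).factorial * (N-t).factorial) := by
  by_cases hsB : s ≤ B
  · rw [if_pos hsB, div_eq_div_iff (by positivity) (by positivity)]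
    have hB : B.factorial = B.choose s * s.factorial * (B-s).factorial :=
      (Nat.choose_mul_factorial_mul_factorial hsB).symm
    have hA : (α+t).factorial = (α+t).choose (t-s) * (t-s).factorial * (α+s).factorial := by
      have h := (Nat.choose_mul_factorial_mul_factorial (show t-s ≤ α+t by omega)).symm
      have e : α+t-(t-s) = α+s := by omega
      rw [e] at h; exact h
    have hN : (N-s).factorial = (N-s).choose (t-s) * (t-s).factorial * (N-t).factorial := by
      have h := (Nat.choose_mul_factorial_mul_factorial (show t-s ≤ N-s by omega)).symm
      have e : N-s-(t-s) = N-t := by omega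
      rw [e] at h; exact h
    push_cast
    rw [hB, hA, hN]
    push_cast
    ring
  · rw [if_neg hsB, Nat.choose_eq_zero_of_lt (by omega)]
    simp

lemma coeff (N α B t : ℕ) (ht : t ≤ N) :
    ∑ s ∈ range (t+1),
      (if s ≤ B then ((N-s).choose (t-s) : ℝ) /
        ((B-s).factorial * (α+s).factorial * s.factorial * (N-s).factorial) else 0)
    = (N.choose t : ℝ) * ((B+α+t).factorial / (α+t).factorial)
        / (B.factorial * N.factorial * (B+α).factorial) := by
  have h1 : ∑ s ∈ range (t+1),
      (if s ≤ B then ((N-s).choose (t-s) : ℝ) /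
        ((B-s).factorial * (α+s).factorial * s.factorial * (N-s).factorial) else 0)
      = ∑ s ∈ range (t+1),
        (B.choose s * (α+t).choose (t-s) : ℝ) /
          (B.factorial * (α+t).factorial * (N-t).factorial) := by
    refine sum_congr rfl fun s hs => ?_
    exact coeff_term N α B t s ht (by have := mem_range.mp hs; omega)
  rw [h1, ← sum_div]
  have h2 : ∑ s ∈ range (t+1), (B.choose s * (α+t).choose (t-s) : ℝ)
      = ((B + (α+t)).choose t : ℝ) := by
    rw [Nat.add_choose_eq, Finset.Nat.sum_antidiagonal_eq_sum_range_succ_mk]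
    push_cast
    ring
  rw [h2]
  rw [div_eq_div_iff (by positivity) (by positivity)]
  have e1 : (B+α+t).factorial = (B+(α+t)).choose t * t.factorial * (B+α).factorial := by
    have h := (Nat.choose_mul_factorial_mul_factorial (show t ≤ B+(α+t) by omega)).symm
    have e : B+(α+t)-t = B+α := by omega
    rw [e] at h
    rw [show B+α+t = B+(α+t) by omega]
    exact h
  have e2 : N.factorial = N.choose t * t.factorial * (N-t).factorial :=
    (Nat.choose_mul_factorial_mul_factorial ht).symm
  rw [e1, e2]
  push_cast
  have hne : ((α+t).factorial : ℝ) ≠ 0 := by positivity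
  field_simp

lemma key (N α B : ℕ) (y : ℝ) :
    ∑ s ∈ range (min N B + 1),
      (-1:ℝ)^s * y^s * (1-y)^(N-s) /
        ((B-s).factorial * (α+s).factorial * s.factorial * (N-s).factorial)
    = (1 / ((B.factorial : ℝ) * N.factorial * (B+α).factorial)) *
      ∑ s ∈ range (N+1),
        (N.choose s : ℝ) * ((B+α+s).factorial / (α+s).factorial) * (-y)^s := by
  have step1 : ∑ s ∈ range (min N B + 1),
      (-1:ℝ)^s * y^s * (1-y)^(N-s) /
        ((B-s).factorial * (α+s).factorial * s.factorial * (N-s).factorial)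
      = ∑ s ∈ range (N+1),
        (if s ≤ B then (-1:ℝ)^s * y^s * (1-y)^(N-s) /
          ((B-s).factorial * (α+s).factorial * s.factorial * (N-s).factorial) else 0) := by
    rw [← Finset.sum_subset (Finset.range_subset_range.mpr (by omega : min N B + 1 ≤ N+1))]
    · refine sum_congr rfl fun s hs => ?_
      rw [if_pos (by have := mem_range.mp hs; omega)]
    · intro x hx hx'
      have h1 := mem_range.mp hx
      have h2 : ¬ x < min N B + 1 := fun h => hx' (mem_range.mpr h)
      rw [if_neg (by omega)]
  have step2 : ∀ s ∈ range (N+1),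
      (if s ≤ B then (-1:ℝ)^s * y^s * (1-y)^(N-s) /
        ((B-s).factorial * (α+s).factorial * s.factorial * (N-s).factorial) else 0)
      = ∑ k ∈ range (N+1-s),
          (if s ≤ B then (((N-s).choose k : ℝ) /
            ((B-s).factorial * (α+s).factorial * s.factorial * (N-s).factorial)) else 0)
          * (-y)^(s+k) := by
    intro s hs
    have hsN := mem_range.mp hs
    by_cases hsB : s ≤ B
    · simp only [if_pos hsB]
      have hexp : (1-y)^(N-s) = ∑ k ∈ range (N+1-s), ((N-s).choose k : ℝ) * (-y)^k := by
        have := add_pow (-y) 1 (N-s)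
        simp only [one_pow, mul_one] at this
        rw [show (1:ℝ)-y = -y+1 by ring, this, show N+1-s = (N-s)+1 by omega]
        exact sum_congr rfl fun k _ => by ring
      rw [hexp, Finset.mul_sum, Finset.sum_div]
      refine sum_congr rfl fun k _ => ?_
      rw [pow_add, neg_pow y s]
      ring
    · simp only [if_neg hsB]
      simp
  rw [step1, sum_congr rfl step2, sum_triangle]
  rw [Finset.mul_sum]
  refine sum_congr rfl fun t ht => ?_
  have htN := mem_range.mp ht
  have inner : ∑ s ∈ range (t+1),
      (if s ≤ B then (((N-s).choose (t-s) : ℝ) /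
        ((B-s).factorial * (α+s).factorial * s.factorial * (N-s).factorial)) else 0)
      * (-y)^(s+(t-s))
      = (∑ s ∈ range (t+1),
        (if s ≤ B then (((N-s).choose (t-s) : ℝ) /
          ((B-s).factorial * (α+s).factorial * s.factorial * (N-s).factorial)) else 0))
        * (-y)^t := by
    rw [Finset.sum_mul]
    refine sum_congr rfl fun s hs => ?_
    rw [show s+(t-s) = t by have := mem_range.mp hs; omega]
  rw [inner, coeff N α B t (by omega)]
  ring

end WignerAux

/-- Formula (3.19): the little Wigner d-function via a Jacobi polynomial, for `m₁ ≥ m₂`: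
`d^j_{m₁,m₂}(θ) = sin(θ/2)^{m₁−m₂} cos(θ/2)^{m₁+m₂} / ((j+m₂)!(j−m₂)!) ·
P^{(m₁−m₂, m₁+m₂)}_{j−m₁}(cos θ)`. -/

theorem wignerd_jacobi (j m₁ m₂ : ℝ) (hj : HalfInt j) (hj0 : 0 ≤ j)
    (hm₁ : HalfInt m₁) (hm₂ : HalfInt m₂)
    (hjm₁ : ∃ a : ℤ, j + m₁ = a) (hjm₂ : ∃ a : ℤ, j + m₂ = a)
    (hm₁l : -j ≤ m₁) (hm₁u : m₁ ≤ j) (hm₂l : -j ≤ m₂) (hm₂u : m₂ ≤ j)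
    (hm : m₁ ≥ m₂) (θ : ℝ) (hθ : θ ∈ Set.Ioo 0 Real.pi) :
    wignerd j m₁ m₂ θ =
      Real.sin (θ / 2) ^ ⌊m₁ - m₂⌋ * Real.cos (θ / 2) ^ ⌊m₁ + m₂⌋ /
        (Real.Gamma (j + m₂ + 1) * Real.Gamma (j - m₂ + 1)) *
        jacobiP (m₁ - m₂) (m₁ + m₂) (⌊j - m₁⌋.toNat) (Real.cos θ) := by
  obtain ⟨k2, hk2⟩ := hj
  obtain ⟨A, hA⟩ := hjm₁
  obtain ⟨Bz, hBz⟩ := hjm₂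
  have h2j : 2*j = (k2:ℝ) := by rw [hk2]; ring
  have hαR : ((A - Bz : ℤ) : ℝ) = m₁ - m₂ := by push_cast; linarith
  have hNR : ((k2 - A : ℤ) : ℝ) = j - m₁ := by push_cast; linarith
  have hα0 : 0 ≤ A - Bz := by
    have : (0:ℝ) ≤ ((A - Bz : ℤ) : ℝ) := by rw [hαR]; linarith
    exact_mod_cast this
  have hN0 : 0 ≤ k2 - A := by
    have : (0:ℝ) ≤ ((k2 - A : ℤ) : ℝ) := by rw [hNR]; linarith
    exact_mod_cast this
  have hB0 : 0 ≤ Bz := by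
    have : (0:ℝ) ≤ (Bz : ℝ) := by rw [← hBz]; linarith
    exact_mod_cast this
  set α : ℕ := (A - Bz).toNat with hαdef
  set N : ℕ := (k2 - A).toNat with hNdef
  set B : ℕ := Bz.toNat with hBdef
  have hα : (α:ℝ) = m₁ - m₂ := by
    rw [hαdef]; rw [← hαR]; norm_cast; omega
  have hN : (N:ℝ) = j - m₁ := by
    rw [hNdef]; rw [← hNR]; norm_cast; omega
  have hB : (B:ℝ) = j + m₂ := by
    rw [hBdef, hBz]; norm_cast; omega
  -- trig setup
  obtain ⟨hθ0, hθπ⟩ := hθ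
  set σ := Real.sin (θ/2) with hσdef
  set c := Real.cos (θ/2) with hcdef
  have hσ : 0 < σ := Real.sin_pos_of_pos_of_lt_pi (by linarith) (by linarith [Real.pi_pos])
  have hc : 0 < c := Real.cos_pos_of_mem_Ioo
    ⟨by linarith [Real.pi_pos], by linarith⟩
  set y := σ^2 with hydef
  have hc2 : c^2 = 1 - y := by
    rw [hydef, hσdef, hcdef]
    have := Real.sin_sq_add_cos_sq (θ/2)
    linarith
  have hcosθ : (Real.cos θ - 1)/2 = -y := by
    have h := Real.cos_sq (θ/2)
    rw [show 2*(θ/2) = θ by ring, ← hcdef] at h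
    linarith [hc2]
  -- floor/ceil computations
  have f1 : ⌈m₁ - m₂⌉ = ((α:ℕ):ℤ) := by
    rw [← hα]; exact_mod_cast Int.ceil_natCast α
  have f2 : ⌈m₂ - m₁⌉ = -((α:ℕ):ℤ) := by
    rw [show m₂ - m₁ = ((-(α:ℤ) : ℤ):ℝ) by push_cast; linarith, Int.ceil_intCast]
  have e1 : j - m₂ = ((N+α:ℕ):ℝ) := by push_cast; linarith
  have e2 : j + m₁ = ((B+α:ℕ):ℝ) := by push_cast; linarith
  have f3 : ⌊min (j - m₂) (j + m₁)⌋ = ((min N B + α : ℕ):ℤ) := by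
    rw [e1, e2, show min ((N+α:ℕ):ℝ) ((B+α:ℕ):ℝ) = ((min N B + α : ℕ):ℝ) by norm_cast; omega,
      Int.floor_natCast]
  have f4 : ⌊2*j + m₁ - m₂⌋ = ((B+N+2*α : ℕ):ℤ) := by
    rw [show 2*j + m₁ - m₂ = ((B+N+2*α:ℕ):ℝ) by push_cast; linarith, Int.floor_natCast]
  have f5 : ⌊m₁ + m₂⌋ = ((B:ℤ) - N) := by
    rw [show m₁ + m₂ = (((B:ℤ) - N : ℤ):ℝ) by push_cast; linarith, Int.floor_intCast]
  have f6 : ⌊j - m₁⌋.toNat = N := by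
    rw [show j - m₁ = ((N:ℕ):ℝ) by push_cast; linarith, Int.floor_natCast]
    exact Int.toNat_natCast N
  -- rewrite the LHS
  rw [wignerd, f1, f2, f3, f4]
  rw [show max 0 ((α:ℕ):ℤ) = ((α:ℕ):ℤ) from max_eq_right (Int.natCast_nonneg α)]
  have himg : Finset.Icc ((α:ℕ):ℤ) (((min N B + α : ℕ)):ℤ)
      = Finset.image (fun s : ℕ => (s:ℤ) + α) (Finset.range (min N B + 1)) := by
    ext x
    simp only [Finset.mem_Icc, Finset.mem_image, Finset.mem_range]
    constructor
    · rintro ⟨h1, h2⟩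
      exact ⟨(x - α).toNat, by omega, by omega⟩
    · rintro ⟨s, hs, rfl⟩
      omega
  rw [himg, Finset.sum_image (by intro a _ b _ h; simp only [add_left_inj, Nat.cast_inj] at h; exact h)]
  have hterm : ∀ s ∈ Finset.range (min N B + 1),
      (-1 : ℝ) ^ (-((α:ℕ):ℤ) + ((s:ℤ) + α)) /
        (Real.Gamma (j + m₁ - (((s:ℤ) + (α:ℤ) : ℤ) : ℝ) + 1) *
          Real.Gamma ((((s:ℤ) + (α:ℤ) : ℤ) : ℝ) + 1) *
          Real.Gamma (m₂ - m₁ + (((s:ℤ) + (α:ℤ) : ℤ) : ℝ) + 1) *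
          Real.Gamma (j - m₂ - (((s:ℤ) + (α:ℤ) : ℤ) : ℝ) + 1)) *
        σ ^ (-((α:ℕ):ℤ) + 2 * ((s:ℤ) + α)) *
        c ^ (((B+N+2*α : ℕ):ℤ) - 2 * ((s:ℤ) + α))
      = σ ^ α * c ^ ((B:ℤ) - N) *
        ((-1:ℝ)^s * y^s * (1-y)^(N-s) /
          ((B-s).factorial * ((α+s).factorial) * s.factorial * (N-s).factorial)) := by
    intro s hs
    have hsm := Finset.mem_range.mp hs
    have hsN : s ≤ N := by omega
    have hsB : s ≤ B := by omega
    have g1 : j + m₁ - (((s:ℤ) + (α:ℤ) : ℤ) : ℝ) + 1 = ((B-s:ℕ):ℝ) + 1 := by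
      rw [Nat.cast_sub hsB]; push_cast; linarith
    have g2 : (((s:ℤ) + (α:ℤ) : ℤ) : ℝ) + 1 = ((α+s:ℕ):ℝ) + 1 := by push_cast; ring
    have g3 : m₂ - m₁ + (((s:ℤ) + (α:ℤ) : ℤ) : ℝ) + 1 = ((s:ℕ):ℝ) + 1 := by
      push_cast; linarith
    have g4 : j - m₂ - (((s:ℤ) + (α:ℤ) : ℤ) : ℝ) + 1 = ((N-s:ℕ):ℝ) + 1 := by
      rw [Nat.cast_sub hsN]; push_cast; linarith
    rw [g1, g2, g3, g4, Real.Gamma_nat_eq_factorial, Real.Gamma_nat_eq_factorial,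
      Real.Gamma_nat_eq_factorial, Real.Gamma_nat_eq_factorial]
    have g5 : (-1 : ℝ) ^ (-((α:ℕ):ℤ) + ((s:ℤ) + α)) = (-1:ℝ)^s := by
      rw [show -((α:ℕ):ℤ) + ((s:ℤ) + α) = ((s:ℕ):ℤ) by ring, zpow_natCast]
    have g6 : σ ^ (-((α:ℕ):ℤ) + 2 * ((s:ℤ) + α)) = σ^α * y^s := by
      rw [show -((α:ℕ):ℤ) + 2 * ((s:ℤ) + α) = ((α + 2*s : ℕ):ℤ) by push_cast; ring,
        zpow_natCast, pow_add, pow_mul, hydef]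
    have g7 : c ^ (((B+N+2*α : ℕ):ℤ) - 2 * ((s:ℤ) + α)) = c ^ ((B:ℤ) - N) * (1-y)^(N-s) := by
      rw [show ((B+N+2*α : ℕ):ℤ) - 2 * ((s:ℤ) + α) = ((B:ℤ) - N) + ((2*(N-s):ℕ):ℤ) by
        push_cast [Nat.cast_sub hsN]; ring]
      rw [zpow_add₀ (ne_of_gt hc), zpow_natCast, pow_mul, hc2]
    rw [g5, g6, g7]
    ring
  rw [Finset.sum_congr rfl hterm, ← Finset.mul_sum, WignerAux.key N α B y]
  -- rewrite the RHS
  have f1' : ⌊m₁ - m₂⌋ = ((α:ℕ):ℤ) := by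
    rw [← hα]; exact_mod_cast Int.floor_natCast α
  rw [f1', f5, f6, zpow_natCast]
  have g8 : Real.Gamma (j + m₂ + 1) = (B.factorial : ℝ) := by
    rw [show j + m₂ + 1 = ((B:ℕ):ℝ) + 1 by rw [hB], Real.Gamma_nat_eq_factorial]
  have g9 : Real.Gamma (j - m₂ + 1) = (((N+α).factorial : ℕ) : ℝ) := by
    rw [show j - m₂ + 1 = ((N+α:ℕ):ℝ) + 1 by rw [e1], Real.Gamma_nat_eq_factorial]
  rw [g8, g9, jacobiP]
  have g10 : Real.Gamma (m₁ - m₂ + (N:ℝ) + 1) = (((α+N).factorial : ℕ) : ℝ) := by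
    rw [show m₁ - m₂ + (N:ℝ) + 1 = ((α+N:ℕ):ℝ) + 1 by push_cast; linarith,
      Real.Gamma_nat_eq_factorial]
  have g11 : Real.Gamma (m₁ - m₂ + (m₁ + m₂) + (N:ℝ) + 1) = (((B+α).factorial : ℕ) : ℝ) := by
    rw [show m₁ - m₂ + (m₁ + m₂) + (N:ℝ) + 1 = ((B+α:ℕ):ℝ) + 1 by push_cast; linarith,
      Real.Gamma_nat_eq_factorial]
  have hsum : ∀ s ∈ Finset.range (N+1),
      (N.choose s : ℝ) *
        (Real.Gamma (m₁ - m₂ + (m₁ + m₂) + (N:ℝ) + (s:ℝ) + 1) /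
          Real.Gamma (m₁ - m₂ + (s:ℝ) + 1)) * ((Real.cos θ - 1)/2)^s
      = (N.choose s : ℝ) * (((B+α+s).factorial : ℝ) / ((α+s).factorial : ℝ)) * (-y)^s := by
    intro s _
    rw [show m₁ - m₂ + (m₁ + m₂) + (N:ℝ) + (s:ℝ) + 1 = ((B+α+s:ℕ):ℝ) + 1 by
        push_cast; linarith,
      show m₁ - m₂ + (s:ℝ) + 1 = ((α+s:ℕ):ℝ) + 1 by push_cast; linarith,
      Real.Gamma_nat_eq_factorial, Real.Gamma_nat_eq_factorial, hcosθ]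
  rw [g10, g11, Finset.sum_congr rfl hsum]
  have hne1 : ((B.factorial : ℕ) : ℝ) ≠ 0 := by positivity
  have hne2 : ((N.factorial : ℕ) : ℝ) ≠ 0 := by positivity
  have hne3 : (((B+α).factorial : ℕ) : ℝ) ≠ 0 := by positivity
  have hne4 : (((N+α).factorial : ℕ) : ℝ) ≠ 0 := by positivity
  rw [show α + N = N + α from add_comm α N]
  field_simp
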